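/- For each k = 1, …, K, let z_{k,1}, …, z_{k,N} ∈ ℝ^{q_k}, let I_k(w) = Σ_{i=1}^N w_i z_{k,i} z_{k,i}ᵀ, and let Φ_k(w) = φ_k(I_k(w)) where φ_k is a convex real-valued function on q_k×q_k matrices that is differentiable at I_k(w*). Let w* ∈ Ω and η_1, …, η_K ≥ 0. Then w* minimizes Σ_{k=1}^K η_k Φ_k over Ω if and only if Σ_{k=1}^K η_k d_k(i, w*) ≤ 0 for all i = 1, …, N, where d_k(i, w*) = trace(∇φ_k(I_k(w*))ᵀ (I_k(w*) − z_{k,i} z_{k,i}ᵀ)). -/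

import Mathlib

open Finset Matrix

noncomputable section

attribute [local instance] Matrix.normedAddCommGroup Matrix.normedSpace

/-- Dot product of two real vectors indexed by a finite type. -/
def dotp {α : Type*} [Fintype α] (g w : α → ℝ) : ℝ := ∑ i, g i * w i

/-- The probability simplex Ω in ℝ^N. -/
def simplex (N : ℕ) : Set (Fin N → ℝ) := {w | (∑ i, w i) = 1 ∧ ∀ i, 0 ≤ w i}

/-- The subdifferential of a convex function `Φ : ℝ^N → ℝ` at `w`. -/
def subdiff {N : ℕ} (Φ : (Fin N → ℝ) → ℝ) (w : Fin N → ℝ) : Set (Fin N → ℝ) :=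
  {g | ∀ w', dotp g (w' - w) ≤ Φ w' - Φ w}

/-- The i-th standard basis vector of ℝ^N. -/
def stdBasis {N : ℕ} (i : Fin N) : Fin N → ℝ := fun j => if j = i then 1 else 0

/-- The information matrix `I(w) = Σ_i w_i z_i z_iᵀ`. -/
def infoMat {N q : ℕ} (z : Fin N → Fin q → ℝ) (w : Fin N → ℝ) :
    Matrix (Fin q) (Fin q) ℝ := ∑ i, w i • Matrix.vecMulVec (z i) (z i)

/-- The smallest eigenvalue of a (symmetric) real matrix `M`. -/
def lambdaMin {q : ℕ} (M : Matrix (Fin q) (Fin q) ℝ) : ℝ :=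
  sInf {r : ℝ | ∃ v : Fin q → ℝ, v ≠ 0 ∧ M.mulVec v = r • v}

open Filter Topology

lemma helper_deriv_le_sub {g : ℝ → ℝ} {g' : ℝ} (hconv : ConvexOn ℝ Set.univ g)
    (hg : HasDerivAt g g' 0) : g' ≤ g 1 - g 0 := by
  have ht := hasDerivAt_iff_tendsto_slope.1 hg
  have h1 : Tendsto (slope g 0) (𝓝[>] 0) (𝓝 g') :=
    ht.mono_left (nhdsWithin_mono _ (fun x hx => ne_of_gt hx))
  refine le_of_tendsto h1 ?_
  filter_upwards [Ioo_mem_nhdsGT_of_mem (by simp : (0:ℝ) ∈ Set.Ico (0:ℝ) 1)] with t ht2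
  have := hconv.secant_mono (a := 0) trivial trivial trivial (ne_of_gt ht2.1) one_ne_zero ht2.2.le
  simpa [slope_def_field] using this

lemma helper_nonneg_deriv {g : ℝ → ℝ} {g' : ℝ} (hg : HasDerivAt g g' 0)
    (hmin : ∀ t ∈ Set.Ioc (0:ℝ) 1, g 0 ≤ g t) : 0 ≤ g' := by
  have ht := hasDerivAt_iff_tendsto_slope.1 hg
  have h1 : Tendsto (slope g 0) (𝓝[>] 0) (𝓝 g') :=
    ht.mono_left (nhdsWithin_mono _ (fun x hx => ne_of_gt hx))
  refine ge_of_tendsto h1 ?_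
  filter_upwards [Ioo_mem_nhdsGT_of_mem (by simp : (0:ℝ) ∈ Set.Ico (0:ℝ) 1)] with t ht2
  have h0 : g 0 ≤ g t := hmin t ⟨ht2.1, ht2.2.le⟩
  have : (0:ℝ) ≤ (g t - g 0) / t := div_nonneg (by linarith) ht2.1.le
  simpa [slope_def_field] using this

lemma infoMat_smul' {N q : ℕ} (z : Fin N → Fin q → ℝ) (t : ℝ) (w : Fin N → ℝ) :
    infoMat z (t • w) = t • infoMat z w := by
  simp [infoMat, smul_smul, Finset.smul_sum]

lemma infoMat_sub' {N q : ℕ} (z : Fin N → Fin q → ℝ) (w v : Fin N → ℝ) :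
    infoMat z (w - v) = infoMat z w - infoMat z v := by
  simp [infoMat, sub_smul, Finset.sum_sub_distrib]

lemma infoMat_aff {N q : ℕ} (z : Fin N → Fin q → ℝ) (ws v : Fin N → ℝ) (t : ℝ) :
    infoMat z (ws + t • v) = infoMat z ws + t • infoMat z v := by
  simp [infoMat, add_smul, smul_smul, Finset.sum_add_distrib, Finset.smul_sum]

lemma infoMat_std {N q : ℕ} (z : Fin N → Fin q → ℝ) (i : Fin N) :
    infoMat z (stdBasis i) = Matrix.vecMulVec (z i) (z i) := by
  simp [infoMat, _root_.stdBasis, ite_smul, Finset.sum_ite_eq']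

lemma g_hasDerivAt {q : ℕ} (φ : Matrix (Fin q) (Fin q) ℝ → ℝ)
    (L : Matrix (Fin q) (Fin q) ℝ →L[ℝ] ℝ) (M0 V : Matrix (Fin q) (Fin q) ℝ)
    (hdiff : HasFDerivAt φ L M0) :
    HasDerivAt (fun t : ℝ => φ (M0 + t • V)) (L V) 0 := by
  have hm : HasDerivAt (fun t : ℝ => M0 + t • V) V 0 := by
    have h := ((hasDerivAt_id (0:ℝ)).smul_const V).const_add M0; simp only [one_smul, id_eq, id] at h; exact h
  have hd' : HasFDerivAt φ L (M0 + (0:ℝ) • V) := by simpa using hdiff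
  exact hd'.comp_hasDerivAt (0:ℝ) hm

lemma g_convex {q : ℕ} (φ : Matrix (Fin q) (Fin q) ℝ → ℝ)
    (hφ : ConvexOn ℝ Set.univ φ) (M0 V : Matrix (Fin q) (Fin q) ℝ) :
    ConvexOn ℝ Set.univ (fun t : ℝ => φ (M0 + t • V)) := by
  refine ⟨convex_univ, fun x _ y _ a b ha hb hab => ?_⟩
  have h : M0 + (a • x + b • y) • V = a • (M0 + x • V) + b • (M0 + y • V) := by
    calc M0 + (a • x + b • y) • V = (a + b) • M0 + (a • x + b • y) • V := by
          rw [hab, one_smul]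
      _ = a • (M0 + x • V) + b • (M0 + y • V) := by
          simp only [smul_eq_mul]; module
  simp only [smul_eq_mul] at h ⊢
  rw [h]
  exact hφ.2 trivial trivial ha hb hab


/-- with `Φ_k(w) = φ_k(I_k(w))`, each `φ_k` convex and differentiable at `I_k(w*)`
with gradient matrix `G k`, and multipliers `η_k ≥ 0`:  `w*` minimizes `Σ_k η_k Φ_k` over the
simplex iff `Σ_k η_k d_k(i, w*) ≤ 0` for all `i`, where
`d_k(i, w*) = trace(∇φ_k(I_k(w*))ᵀ (I_k(w*) − z_{k,i} z_{k,i}ᵀ))`. -/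
theorem stmt11 {N K : ℕ} (q : Fin K → ℕ)
    (z : ∀ k : Fin K, Fin N → Fin (q k) → ℝ)
    (φ : ∀ k : Fin K, Matrix (Fin (q k)) (Fin (q k)) ℝ → ℝ)
    (hφconv : ∀ k, ConvexOn ℝ Set.univ (φ k))
    (ws : Fin N → ℝ) (hws : ws ∈ simplex N)
    (L : ∀ k : Fin K, Matrix (Fin (q k)) (Fin (q k)) ℝ →L[ℝ] ℝ)
    (hdiff : ∀ k, HasFDerivAt (φ k) (L k) (infoMat (z k) ws))
    (G : ∀ k : Fin K, Matrix (Fin (q k)) (Fin (q k)) ℝ)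
    (hG : ∀ k, ∀ H : Matrix (Fin (q k)) (Fin (q k)) ℝ, L k H = Matrix.trace ((G k)ᵀ * H))
    (η : Fin K → ℝ) (hη : ∀ k, 0 ≤ η k) :
    (∀ w ∈ simplex N,
        (∑ k, η k * φ k (infoMat (z k) ws)) ≤ ∑ k, η k * φ k (infoMat (z k) w)) ↔
      ∀ i : Fin N,
        (∑ k, η k * Matrix.trace ((G k)ᵀ *
          (infoMat (z k) ws - Matrix.vecMulVec (z k i) (z k i)))) ≤ 0 := by
  constructor
  · intro hmin i
    set v : Fin N → ℝ := _root_.stdBasis i - ws with hv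
    have hder : HasDerivAt
        (fun t : ℝ => ∑ k, η k * φ k (infoMat (z k) ws + t • infoMat (z k) v))
        (∑ k, η k * L k (infoMat (z k) v)) 0 :=
      HasDerivAt.fun_sum fun k _ =>
        (g_hasDerivAt (φ k) (L k) _ _ (hdiff k)).const_mul (η k)
    have h0 : 0 ≤ ∑ k, η k * L k (infoMat (z k) v) := by
      refine helper_nonneg_deriv hder ?_
      intro t ht
      have hmem : ws + t • v ∈ simplex N := by
        constructor
        · have : ∑ j, (ws j + t * v j) = 1 := by
            rw [Finset.sum_add_distrib, hws.1, ← Finset.mul_sum, hv]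
            have : ∑ j, (_root_.stdBasis i - ws) j = 0 := by
              simp [_root_.stdBasis, Finset.sum_sub_distrib, Finset.sum_ite_eq', hws.1]
            rw [this, mul_zero, add_zero]
          simpa using this
        · intro j
          have hwsj := hws.2 j
          have hstd : (0:ℝ) ≤ _root_.stdBasis i j := by
            simp only [_root_.stdBasis]; split <;> norm_num
          have : ws j + t * v j = (1 - t) * ws j + t * _root_.stdBasis i j := by
            simp [hv]; ring
          simp only [Pi.add_apply, Pi.smul_apply, smul_eq_mul]
          rw [this]
          have h1t : 0 ≤ 1 - t := by linarith [ht.2]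
          exact add_nonneg (mul_nonneg h1t hwsj) (mul_nonneg ht.1.le hstd)
      have := hmin (ws + t • v) hmem
      simpa [infoMat_aff] using this
    have hkey : ∀ k, η k * Matrix.trace ((G k)ᵀ *
        (infoMat (z k) ws - Matrix.vecMulVec (z k i) (z k i)))
        = -(η k * L k (infoMat (z k) v)) := by
      intro k
      have hVeq : infoMat (z k) v
          = -(infoMat (z k) ws - Matrix.vecMulVec (z k i) (z k i)) := by
        rw [hv, infoMat_sub', infoMat_std, neg_sub]
      rw [← hG, hVeq, map_neg]
      ring
    have hsum : ∑ k, η k * Matrix.trace ((G k)ᵀ *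
        (infoMat (z k) ws - Matrix.vecMulVec (z k i) (z k i)))
        = -(∑ k, η k * L k (infoMat (z k) v)) := by
      rw [← Finset.sum_neg_distrib]
      exact Finset.sum_congr rfl fun k _ => hkey k
    rw [hsum]
    linarith
  · intro hcond w hw
    set v : Fin N → ℝ := w - ws with hv
    have hgrad : ∀ k, L k (infoMat (z k) v)
        ≤ φ k (infoMat (z k) w) - φ k (infoMat (z k) ws) := by
      intro k
      have := helper_deriv_le_sub
        (g_convex (φ k) (hφconv k) (infoMat (z k) ws) (infoMat (z k) v))
        (g_hasDerivAt (φ k) (L k) _ _ (hdiff k))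
      have hM : infoMat (z k) ws + infoMat (z k) v = infoMat (z k) w := by
        rw [hv, infoMat_sub']; abel
      simpa [hM] using this
    have hsum1 : ∑ k, η k * L k (infoMat (z k) v)
        ≤ (∑ k, η k * φ k (infoMat (z k) w)) - ∑ k, η k * φ k (infoMat (z k) ws) := by
      rw [← Finset.sum_sub_distrib]
      refine Finset.sum_le_sum fun k _ => ?_
      have := mul_le_mul_of_nonneg_left (hgrad k) (hη k)
      linarith [this]
    have hVdec : ∀ k, L k (infoMat (z k) v) = ∑ i, w i *
        L k (Matrix.vecMulVec (z k i) (z k i) - infoMat (z k) ws) := by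
      intro k
      have hVeq : infoMat (z k) v
          = ∑ i, w i • (Matrix.vecMulVec (z k i) (z k i) - infoMat (z k) ws) := by
        rw [hv, infoMat_sub']
        have h1 : ∑ i, w i • (Matrix.vecMulVec (z k i) (z k i) - infoMat (z k) ws)
            = infoMat (z k) w - (∑ i, w i) • infoMat (z k) ws := by
          simp [smul_sub, Finset.sum_sub_distrib, ← Finset.sum_smul, infoMat]
        rw [h1, hw.1, one_smul]
      rw [hVeq, map_sum]
      exact Finset.sum_congr rfl fun i _ => by
        rw [ContinuousLinearMap.map_smul]; rfl
    have hnn : 0 ≤ ∑ k, η k * L k (infoMat (z k) v) := by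
      calc (0:ℝ) ≤ ∑ i, w i * ∑ k, η k *
            L k (Matrix.vecMulVec (z k i) (z k i) - infoMat (z k) ws) := by
            refine Finset.sum_nonneg fun i _ => mul_nonneg (hw.2 i) ?_
            have hc := hcond i
            have : ∑ k, η k * Matrix.trace ((G k)ᵀ *
                (infoMat (z k) ws - Matrix.vecMulVec (z k i) (z k i)))
                = -(∑ k, η k * L k (Matrix.vecMulVec (z k i) (z k i) - infoMat (z k) ws)) := by
              rw [← Finset.sum_neg_distrib]
              refine Finset.sum_congr rfl fun k _ => ?_
              rw [← hG, show Matrix.vecMulVec (z k i) (z k i) - infoMat (z k) ws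
                = -(infoMat (z k) ws - Matrix.vecMulVec (z k i) (z k i)) by rw [neg_sub],
                map_neg]
              ring
            rw [this] at hc
            linarith
        _ = ∑ i, ∑ k, η k * (w i *
              L k (Matrix.vecMulVec (z k i) (z k i) - infoMat (z k) ws)) := by
            refine Finset.sum_congr rfl fun i _ => ?_
            rw [Finset.mul_sum]
            exact Finset.sum_congr rfl fun k _ => by ring
        _ = ∑ k, ∑ i, η k * (w i *
              L k (Matrix.vecMulVec (z k i) (z k i) - infoMat (z k) ws)) :=
            Finset.sum_comm
        _ = ∑ k, η k * L k (infoMat (z k) v) := by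
            refine Finset.sum_congr rfl fun k _ => ?_
            rw [hVdec k, Finset.mul_sum]
    linarith
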